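/- arXiv:1610.05027 — 3 statements merged into one kernel-verified Lean document; each statement's English description precedes it below -/
import Mathlib

section
/- If x ∈ M is stable, then its stabilizer G_x is compact. -/
open Set

/-- A differentiable convex function on ℝ with vanishing derivative at 0 attains
its minimum at 0. -/
lemma aux_min_at_zero {f : ℝ → ℝ} (hconv : ConvexOn ℝ Set.univ f)
    (hdiff : Differentiable ℝ f) (hd : deriv f 0 = 0) (t : ℝ) : f 0 ≤ f t := by
  rcases lt_trichotomy t 0 with ht | ht | ht
  · have h1 := hconv.slope_le_deriv (mem_univ t) (mem_univ 0) ht (hdiff 0)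
    rw [hd, slope_def_field] at h1
    have h3 : (0:ℝ) < 0 - t := by linarith
    have h4 := (div_le_iff₀ h3).mp h1
    linarith
  · simp [ht]
  · have h1 := hconv.deriv_le_slope (mem_univ 0) (mem_univ t) ht (hdiff 0)
    rw [hd, slope_def_field] at h1
    have h3 : (0:ℝ) < t - 0 := by linarith
    have h4 := (le_div_iff₀ h3).mp h1
    linarith

/-- If a differentiable function vanishes on `[0,1]`, then its (unrestricted) second
derivative at `0` is `0` (either it exists, and then equals the one-sided value `0`,
or `deriv` takes the junk value `0`). -/
lemma aux_second_deriv_zero {f : ℝ → ℝ} (hdiff : Differentiable ℝ f)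
    (hzero : ∀ t ∈ Icc (0:ℝ) 1, f t = 0) :
    iteratedDeriv 2 f 0 = 0 := by
  have hd0 : ∀ t ∈ Ioo (0:ℝ) 1, deriv f t = 0 := by
    intro t ht
    have hev : f =ᶠ[nhds t] fun _ => (0:ℝ) := by
      filter_upwards [Ioo_mem_nhds ht.1 ht.2] with s hs
      exact hzero s ⟨le_of_lt hs.1, le_of_lt hs.2⟩
    rw [hev.deriv_eq]; exact deriv_const t 0
  have hd00 : deriv f 0 = 0 := by
    -- derivative at 0 from the right is 0; use uniqueness on Ici
    have h1 : HasDerivWithinAt f 0 (Ici 0) 0 := by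
      have hc : HasDerivWithinAt (fun _ : ℝ => (0:ℝ)) 0 (Ici 0) 0 :=
        (hasDerivWithinAt_const 0 (Ici 0) 0)
      apply hc.congr_of_eventuallyEq
      · filter_upwards [inter_mem_nhdsWithin (Ici 0) (Iio_mem_nhds one_pos)] with s hs
        exact hzero s ⟨hs.1, le_of_lt hs.2⟩
      · exact hzero 0 ⟨le_refl 0, zero_le_one⟩
    have h2 : HasDerivWithinAt f (deriv f 0) (Ici 0) 0 :=
      ((hdiff 0).hasDerivAt).hasDerivWithinAt
    have hu : UniqueDiffWithinAt ℝ (Ici (0:ℝ)) 0 :=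
      uniqueDiffOn_Ici 0 0 self_mem_Ici
    exact (h2.derivWithin hu).symm.trans (h1.derivWithin hu)
  rw [iteratedDeriv_succ, iteratedDeriv_one]
  by_cases hdd : DifferentiableAt ℝ (deriv f) 0
  · have h2 : HasDerivWithinAt (deriv f) (deriv (deriv f) 0) (Ici 0) 0 :=
      hdd.hasDerivAt.hasDerivWithinAt
    have h1 : HasDerivWithinAt (deriv f) 0 (Ici 0) 0 := by
      have hc : HasDerivWithinAt (fun _ : ℝ => (0:ℝ)) 0 (Ici 0) 0 :=
        hasDerivWithinAt_const 0 (Ici 0) 0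
      apply hc.congr_of_eventuallyEq
      · filter_upwards [inter_mem_nhdsWithin (Ici 0) (Iio_mem_nhds one_pos)] with s hs
        rcases eq_or_lt_of_le (Set.mem_Ici.mp hs.1 : (0:ℝ) ≤ s) with h | h
        · rw [← h]; exact hd00
        · exact hd0 s ⟨h, hs.2⟩
      · exact hd00
    have hu : UniqueDiffWithinAt ℝ (Ici (0:ℝ)) 0 :=
      uniqueDiffOn_Ici 0 0 self_mem_Ici
    exact (h2.derivWithin hu).symm.trans (h1.derivWithin hu)
  · exact deriv_zero_of_not_differentiableAt hdd

/-- If `x ∈ M` is stable (i.e. `F(g·x) = 0` for some `g` and the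
stabilizer algebra is conjugate into `k`, so that no conjugate one-parameter group
`exp(ℝv)`, `v ∈ p \ {0}`, fixes `x`), then the stabilizer `G_x` is compact. -/
theorem stabilizer_compact_of_stable
    {G M p : Type*} [Group G] [TopologicalSpace G] [IsTopologicalGroup G]
    [MulAction G M] [NormedAddCommGroup p] [NormedSpace ℝ p]
    (K : Subgroup G) (expG : p → G) (Ad : G → p →ₗ[ℝ] p) (Ψ : M → G → ℝ)
    (hexp0 : expG 0 = 1)
    (hKcompact : IsCompact (K : Set G))
    -- stabilizers are closed (continuity of the action)
    (hclosed : ∀ y : M, IsClosed ((MulAction.stabilizer G y : Subgroup G) : Set G))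
    (hCartan : ∀ g : G, ∃ k ∈ K, ∃ v : p, g = k * expG v)
    (hAd : ∀ k : G, k ∈ K → ∀ v : p, k⁻¹ * expG v * k = expG (Ad k⁻¹ v))
    (hP1 : ∀ (x : M) (v : p), Differentiable ℝ fun t : ℝ => Ψ x (expG (t • v)))
    (hP2 : ∀ (x : M) (k g : G), k ∈ K → Ψ x (k * g) = Ψ x g)
    (hP3convex : ∀ (x : M) (v : p),
      ConvexOn ℝ Set.univ fun t : ℝ => Ψ x (expG (t • v)))
    (hP3strict : ∀ (x : M) (v : p),
      iteratedDeriv 2 (fun t : ℝ => Ψ x (expG (t • v))) 0 = 0 ↔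
        ∀ t : ℝ, expG (t • v) • x = x)
    (hP4 : ∀ (x : M) (g h : G), Ψ x g + Ψ (g • x) h = Ψ x (h * g))
    (x : M)
    -- `x` is stable
    (hstable : ∃ g : G,
      (∀ v : p, deriv (fun t : ℝ => Ψ (g • x) (expG (t • v))) 0 = 0) ∧
      ∀ (h : G) (v : p), v ≠ 0 → ¬ (∀ t : ℝ, (h * expG (t • v) * h⁻¹) • x = x)) :
    IsCompact ((MulAction.stabilizer G x : Subgroup G) : Set G) := by
  obtain ⟨g₀, hcrit, hnofix⟩ := hstable
  set y : M := g₀ • x with hy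
  -- basic facts about Ψ at y
  have hΨ1 : Ψ y 1 = 0 := by
    have := hP4 y 1 1
    simp only [one_smul, one_mul] at this
    linarith
  have hf0 : ∀ v : p, Ψ y (expG ((0:ℝ) • v)) = 0 := by
    intro v; rw [zero_smul, hexp0, hΨ1]
  -- the function t ↦ Ψ y (exp (t v)) is nonnegative
  have hnonneg : ∀ (v : p) (t : ℝ), 0 ≤ Ψ y (expG (t • v)) := by
    intro v t
    have h := aux_min_at_zero (hP3convex y v) (hP1 y v) (hcrit v) t
    rw [hf0 v] at h
    exact h
  -- any element of the stabilizer of y lies in K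
  have hsub : ((MulAction.stabilizer G y : Subgroup G) : Set G) ⊆ (K : Set G) := by
    intro g hg
    have hgy : g • y = y := hg
    obtain ⟨k, hk, v, hgkv⟩ := hCartan g
    -- Ψ y g = Ψ y (exp v) ≥ 0
    have hΨg : Ψ y g = Ψ y (expG ((1:ℝ) • v)) := by
      rw [one_smul, hgkv, hP2 y k (expG v) hk]
    -- Ψ y g⁻¹ ≥ 0
    obtain ⟨k', hk', v', hgkv'⟩ := hCartan g⁻¹
    have hΨgi : Ψ y g⁻¹ = Ψ y (expG ((1:ℝ) • v')) := by
      rw [one_smul, hgkv', hP2 y k' (expG v') hk']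
    -- cocycle : Ψ y g + Ψ y g⁻¹ = 0
    have hcoc : Ψ y g + Ψ y g⁻¹ = 0 := by
      have := hP4 y g g⁻¹
      rw [hgy, inv_mul_cancel, hΨ1] at this
      exact this
    have h1 : Ψ y (expG ((1:ℝ) • v)) = 0 := by
      have := hnonneg v 1
      have := hnonneg v' 1
      linarith [hΨg, hΨgi, hcoc]
    -- suppose v ≠ 0 and derive a contradiction
    have hv0 : v = 0 := by
      by_contra hv
      -- f vanishes on [0,1]
      have hfz : ∀ t ∈ Icc (0:ℝ) 1, Ψ y (expG (t • v)) = 0 := by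
        intro t ht
        have hle := (hP3convex y v).2 (mem_univ (0:ℝ)) (mem_univ (1:ℝ))
          (by linarith [ht.2] : (0:ℝ) ≤ 1 - t) ht.1 (by ring)
        simp only [smul_eq_mul, mul_zero, mul_one, zero_add] at hle
        have hf00 := hf0 v
        have hge := hnonneg v t
        rw [hf00, h1] at hle
        linarith
      have h2d : iteratedDeriv 2 (fun t : ℝ => Ψ y (expG (t • v))) 0 = 0 :=
        aux_second_deriv_zero (hP1 y v) hfz
      have hfix : ∀ t : ℝ, expG (t • v) • y = y := (hP3strict y v).mp h2d
      -- contradiction with stability, using h = g₀⁻¹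
      apply hnofix g₀⁻¹ v hv
      intro t
      have : (g₀⁻¹ * expG (t • v) * g₀⁻¹⁻¹) • x = g₀⁻¹ • (expG (t • v) • (g₀ • x)) := by
        rw [inv_inv]
        rw [mul_smul, mul_smul]
      rw [this, ← hy, hfix t, hy, inv_smul_smul]
    rw [hv0, hexp0, mul_one] at hgkv
    rw [hgkv]; exact hk
  -- stabilizer of y is compact
  have hycompact : IsCompact ((MulAction.stabilizer G y : Subgroup G) : Set G) :=
    hKcompact.of_isClosed_subset (hclosed y) hsub
  -- stabilizer of x is the image of stabilizer of y under conjugation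
  have himg : ((MulAction.stabilizer G x : Subgroup G) : Set G) =
      (fun g => g₀⁻¹ * g * g₀) '' ((MulAction.stabilizer G y : Subgroup G) : Set G) := by
    ext g
    constructor
    · intro hg
      refine ⟨g₀ * g * g₀⁻¹, ?_, by group⟩
      show (g₀ * g * g₀⁻¹) • y = y
      rw [hy, mul_smul, mul_smul, inv_smul_smul, (show g • x = x from hg)]
    · rintro ⟨h, hh, rfl⟩
      have hhy : h • y = y := hh
      show (g₀⁻¹ * h * g₀) • x = x
      have : (g₀⁻¹ * h * g₀) • x = g₀⁻¹ • (h • (g₀ • x)) := by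
        rw [mul_smul, mul_smul]
      rw [this, ← hy, hhy, hy, inv_smul_smul]
  rw [himg]
  exact hycompact.image (by continuity)
end

section
/- If x ∈ M is polystable, then the intersection Gx ∩ F⁻¹(0) consists of exactly one K-orbit: if y ∈ Gx with F(y) = 0 and g·y ∈ F⁻¹(0) for g = k exp(v) ∈ G, then v ∈ g_y, hence g·y ∈ K·y. Consequently the inclusion F⁻¹(0) ↪ M^{ps} induces a bijection F⁻¹(0)/K → M^{ps}/G. -/
open Set Filter

/-- A differentiable convex function on `ℝ` with vanishing derivative at `0`
attains its minimum at `0`. -/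
lemma convex_min_at_crit {f : ℝ → ℝ} (hc : ConvexOn ℝ Set.univ f)
    (hdiff : Differentiable ℝ f) (h0 : deriv f 0 = 0) (t : ℝ) : f 0 ≤ f t := by
  rcases lt_trichotomy t 0 with h | h | h
  · have hle := hc.slope_le_deriv (Set.mem_univ t) (Set.mem_univ 0) h (hdiff 0)
    rw [h0, slope_def_field] at hle
    have ht : (0:ℝ) < 0 - t := by linarith
    nlinarith [(div_le_iff₀ ht).mp hle]
  · simp [h]
  · have hle := hc.deriv_le_slope (Set.mem_univ 0) (Set.mem_univ t) h (hdiff 0)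
    rw [h0, slope_def_field] at hle
    have ht : (0:ℝ) < t - 0 := by linarith
    nlinarith [(le_div_iff₀ ht).mp hle]

/-- If `x` is polystable then `Gx ∩ F⁻¹(0)` is a single `K`-orbit:
if `F(y) = 0` with `y ∈ Gx`, and `g = k·exp(v)` satisfies `F(g·y) = 0`, then
`exp(ℝv)` fixes `y` and `g·y ∈ K·y`.  Consequently the inclusion
`F⁻¹(0) ↪ M^{ps}` induces a bijection `F⁻¹(0)/K → M^{ps}/G`. -/
theorem polystable_fiber_is_one_K_orbit
    {G M p : Type*} [Group G] [MulAction G M]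
    [NormedAddCommGroup p] [NormedSpace ℝ p]
    (K : Subgroup G) (expG : p → G) (Ad : G → p →ₗ[ℝ] p) (Ψ : M → G → ℝ)
    (hCartan : ∀ g : G, ∃ k ∈ K, ∃ v : p, g = k * expG v)
    (hAd : ∀ k : G, k ∈ K → ∀ v : p, k⁻¹ * expG v * k = expG (Ad k⁻¹ v))
    (hP1 : ∀ (x : M) (v : p), Differentiable ℝ fun t : ℝ => Ψ x (expG (t • v)))
    (hP2 : ∀ (x : M) (k g : G), k ∈ K → Ψ x (k * g) = Ψ x g)
    (hP3convex : ∀ (x : M) (v : p),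
      ConvexOn ℝ Set.univ fun t : ℝ => Ψ x (expG (t • v)))
    (hP3strict : ∀ (x : M) (v : p),
      iteratedDeriv 2 (fun t : ℝ => Ψ x (expG (t • v))) 0 = 0 ↔
        ∀ t : ℝ, expG (t • v) • x = x)
    (hP4 : ∀ (x : M) (g h : G), Ψ x g + Ψ (g • x) h = Ψ x (h * g))
    (y : M)
    -- `F(y) = 0`
    (hFy : ∀ v : p, deriv (fun t : ℝ => Ψ y (expG (t • v))) 0 = 0) :
    ∀ g : G,
      -- if also `F(g·y) = 0` ...
      (∀ v : p, deriv (fun t : ℝ => Ψ (g • y) (expG (t • v))) 0 = 0) →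
      -- ... then in any Cartan decomposition `g = k exp(v)` the factor `exp(ℝv)`
      -- fixes `y`, and `g·y` lies in the `K`-orbit of `y`
      (∀ k ∈ K, ∀ v : p, g = k * expG v → ∀ t : ℝ, expG (t • v) • y = y) ∧
        ∃ k ∈ K, g • y = k • y := by
  intro g hFgy
  -- `Ψ x 1 = 0`
  have hone : ∀ x : M, Ψ x 1 = 0 := by
    intro x
    have h := hP4 x 1 1
    rw [one_smul, mul_one] at h
    linarith
  -- `expG 0` acts trivially
  have he0 : ∀ z : M, expG 0 • z = z := by
    intro z
    have hconst : (fun t : ℝ => Ψ z (expG (t • (0:p)))) = fun _ => Ψ z (expG 0) := by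
      funext t; rw [smul_zero]
    have h2 : iteratedDeriv 2 (fun t : ℝ => Ψ z (expG (t • (0:p)))) 0 = 0 := by
      rw [hconst, iteratedDeriv_succ, iteratedDeriv_one]
      simp
    have := (hP3strict z 0).mp h2 1
    rwa [smul_zero] at this
  -- at a critical point, `expG 0` realizes the minimum over all of `expG`
  have hmin : ∀ x : M, (∀ v, deriv (fun t : ℝ => Ψ x (expG (t • v))) 0 = 0) →
      ∀ w : p, Ψ x (expG 0) ≤ Ψ x (expG w) := by
    intro x hx w
    have := convex_min_at_crit (hP3convex x w) (hP1 x w) (hx w) 1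
    rwa [one_smul, zero_smul] at this
  have hminG : ∀ x : M, (∀ v, deriv (fun t : ℝ => Ψ x (expG (t • v))) 0 = 0) →
      ∀ g' : G, Ψ x (expG 0) ≤ Ψ x g' := by
    intro x hx g'
    obtain ⟨k, hk, w, rfl⟩ := hCartan g'
    rw [hP2 x k _ hk]
    exact hmin x hx w
  -- at a critical point, the minimum value is `0`
  have hzero : ∀ x : M, (∀ v, deriv (fun t : ℝ => Ψ x (expG (t • v))) 0 = 0) →
      Ψ x (expG 0) = 0 := by
    intro x hx
    have hle : Ψ x (expG 0) ≤ 0 := by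
      obtain ⟨k, hk, w, h1⟩ := hCartan 1
      have h := hmin x hx w
      have h2 : Ψ x (expG w) = 0 := by
        rw [← hP2 x k (expG w) hk, ← h1, hone x]
      linarith
    have h4 := hP4 x (expG 0) (expG 0)
    rw [he0 x] at h4
    have hge := hminG x hx (expG 0 * expG 0)
    linarith
  -- `Ψ y g ≤ 0`
  have hneg : Ψ y g ≤ 0 := by
    have h4 := hP4 y g g⁻¹
    rw [inv_mul_cancel, hone y] at h4
    have hge : 0 ≤ Ψ (g • y) g⁻¹ := by
      rw [← hzero (g • y) hFgy]
      exact hminG (g • y) hFgy g⁻¹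
    linarith
  -- Part 1: any Cartan factor `exp v` of `g` fixes `y` along its one-parameter ray
  have part1 : ∀ k ∈ K, ∀ v : p, g = k * expG v → ∀ t : ℝ, expG (t • v) • y = y := by
    intro k hk v hgkv
    set ψ : ℝ → ℝ := fun t => Ψ y (expG (t • v)) with hψdef
    have hψ0 : ψ 0 = 0 := by
      show Ψ y (expG ((0:ℝ) • v)) = 0
      rw [zero_smul]
      exact hzero y hFy
    have hψ1 : ψ 1 = Ψ y g := by
      show Ψ y (expG ((1:ℝ) • v)) = Ψ y g
      rw [one_smul, ← hP2 y k (expG v) hk, ← hgkv]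
    have hψmin : ∀ t, ψ 0 ≤ ψ t :=
      convex_min_at_crit (hP3convex y v) (hP1 y v) (hFy v)
    have hψ10 : ψ 1 = ψ 0 := by
      have := hψmin 1
      rw [hψ0] at this ⊢
      rw [hψ1]
      linarith [hψ1 ▸ this]
    -- ψ is constant on [0,1]
    have hconst : ∀ t ∈ Set.Icc (0:ℝ) 1, ψ t = ψ 0 := by
      intro t ht
      refine le_antisymm ?_ (hψmin t)
      have h := (hP3convex y v).2 (Set.mem_univ (0:ℝ)) (Set.mem_univ (1:ℝ))
        (show (0:ℝ) ≤ 1 - t by linarith [ht.2]) ht.1 (show (1 - t) + t = 1 by ring)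
      have h2 : (1 - t) • (0:ℝ) + t • (1:ℝ) = t := by simp
      rw [h2] at h
      have h3 : (1 - t) • ψ 0 + t • ψ 1 = ψ 0 := by
        rw [hψ10, smul_eq_mul, smul_eq_mul]; ring
      calc ψ t ≤ (1 - t) • ψ 0 + t • ψ 1 := h
        _ = ψ 0 := h3
    -- hence the derivative of ψ vanishes on [0,1)
    have hderiv0 : ∀ t ∈ Set.Ico (0:ℝ) 1, deriv ψ t = 0 := by
      intro t ht
      rcases eq_or_lt_of_le ht.1 with h | h
      · rw [← h]; exact hFy v
      · have hev : ψ =ᶠ[nhds t] fun _ => ψ 0 := by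
          filter_upwards [Ioo_mem_nhds h ht.2] with s hs
          exact hconst s ⟨le_of_lt hs.1, le_of_lt hs.2⟩
        rw [hev.deriv_eq]; simp
    -- so the (possibly junk-valued) second derivative at 0 vanishes
    have h2d : iteratedDeriv 2 ψ 0 = 0 := by
      rw [iteratedDeriv_succ, iteratedDeriv_one]
      by_cases hd : DifferentiableAt ℝ (deriv ψ) 0
      · have A : HasDerivWithinAt (deriv ψ) (deriv (deriv ψ) 0) (Set.Ici 0) 0 :=
          hd.hasDerivAt.hasDerivWithinAt
        have hev : (fun _ : ℝ => (0:ℝ)) =ᶠ[nhdsWithin 0 (Set.Ici (0:ℝ))] deriv ψ := by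
          filter_upwards [Ico_mem_nhdsGE_of_mem (Set.left_mem_Ico.mpr one_pos)] with s hs
          exact (hderiv0 s hs).symm
        have B : HasDerivWithinAt (fun _ : ℝ => (0:ℝ)) (deriv (deriv ψ) 0) (Set.Ici 0) 0 :=
          A.congr_of_eventuallyEq hev (hFy v).symm
        have C : HasDerivWithinAt (fun _ : ℝ => (0:ℝ)) 0 (Set.Ici 0) 0 :=
          hasDerivWithinAt_const _ _ _
        exact ((uniqueDiffOn_Ici (0:ℝ)) 0 Set.self_mem_Ici).eq_deriv _ B C
      · rw [deriv_zero_of_not_differentiableAt hd]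
    exact (hP3strict y v).mp h2d
  refine ⟨part1, ?_⟩
  obtain ⟨k, hk, v, hgkv⟩ := hCartan g
  refine ⟨k, hk, ?_⟩
  have hfix := part1 k hk v hgkv 1
  rw [one_smul] at hfix
  rw [hgkv, mul_smul, hfix]
end

section
/- A probability measure ν on ℙ¹(ℝ) is SL(2,ℝ)-polystable but not stable if and only if ν = (1/2)δ_{p₁} + (1/2)δ_{p₂} for two distinct points p₁ ≠ p₂ in ℙ¹(ℝ). -/
open MeasureTheory Matrix LinearAlgebra.Projectivization
open scoped LinearAlgebra.Projectivization

noncomputable section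

instance : TopologicalSpace (ℙ ℝ (Fin 2 → ℝ)) :=
  inferInstanceAs (TopologicalSpace (Quotient _))

instance : MeasurableSpace (ℙ ℝ (Fin 2 → ℝ)) := borel _

instance : BorelSpace (ℙ ℝ (Fin 2 → ℝ)) := ⟨rfl⟩

/-- The gradient map `μ_p([x]) = ½[xxᵀ/|x|² − Id/2]` of the `SL(2,ℝ)`-action on
`ℙ¹(ℝ)`. -/
def muP1 (q : ℙ ℝ (Fin 2 → ℝ)) : Matrix (Fin 2) (Fin 2) ℝ :=
  (2:ℝ)⁻¹ • ((q.rep ⬝ᵥ q.rep)⁻¹ • vecMulVec q.rep q.rep -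
    (2:ℝ)⁻¹ • (1 : Matrix (Fin 2) (Fin 2) ℝ))

lemma dp_pos {v : Fin 2 → ℝ} (hv : v ≠ 0) : 0 < v ⬝ᵥ v := by
  have h0 : (0:ℝ) ≤ v ⬝ᵥ v := Finset.sum_nonneg fun i _ => mul_self_nonneg _
  rcases lt_or_eq_of_le h0 with h | h
  · exact h
  · exact absurd (dotProduct_self_eq_zero.mp h.symm) hv

lemma muP1_mk (v : Fin 2 → ℝ) (hv : v ≠ 0) (i j : Fin 2) :
    muP1 (Projectivization.mk ℝ v hv) i j
      = (2:ℝ)⁻¹ * ((v ⬝ᵥ v)⁻¹ * (v i * v j) - (2:ℝ)⁻¹ * (if i = j then 1 else 0)) := by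
  obtain ⟨a, ha⟩ := Projectivization.exists_smul_eq_mk_rep ℝ v hv
  have hrep : (Projectivization.mk ℝ v hv).rep = (a : ℝ) • v := by
    rw [← ha, Units.smul_def]
  have hvv : v ⬝ᵥ v ≠ 0 := ne_of_gt (dp_pos hv)
  have ha0 : (a : ℝ) ≠ 0 := a.ne_zero
  simp only [muP1, hrep, Matrix.smul_apply, Matrix.sub_apply, Matrix.vecMulVec_apply,
    smul_dotProduct, dotProduct_smul, smul_eq_mul, Pi.smul_apply,
    Matrix.one_apply, mul_inv]
  congr 1
  rw [sub_left_inj]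
  have hS : v 0 * v 0 + v 1 * v 1 ≠ 0 := by
    simpa [dotProduct, Fin.sum_univ_two] using hvv
  field_simp

lemma isQuotientMap_mkP :
    Topology.IsQuotientMap (fun w : {v : Fin 2 → ℝ // v ≠ 0} => Projectivization.mk ℝ w.1 w.2) :=
  isQuotientMap_quotient_mk'

lemma continuous_muP1_entry (i j : Fin 2) :
    Continuous fun q : ℙ ℝ (Fin 2 → ℝ) => muP1 q i j := by
  rw [isQuotientMap_mkP.continuous_iff]
  have heq : ((fun q : ℙ ℝ (Fin 2 → ℝ) => muP1 q i j) ∘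
      fun w : {v : Fin 2 → ℝ // v ≠ 0} => Projectivization.mk ℝ w.1 w.2)
      = fun w : {v : Fin 2 → ℝ // v ≠ 0} =>
        (2:ℝ)⁻¹ * ((w.1 ⬝ᵥ w.1)⁻¹ * (w.1 i * w.1 j) - (2:ℝ)⁻¹ * (if i = j then 1 else 0)) := by
    funext w; exact muP1_mk w.1 w.2 i j
  rw [heq]
  have hc : ∀ k : Fin 2, Continuous fun w : {v : Fin 2 → ℝ // v ≠ 0} => w.1 k :=
    fun k => (continuous_apply k).comp continuous_subtype_val
  have hd : Continuous fun w : {v : Fin 2 → ℝ // v ≠ 0} => w.1 ⬝ᵥ w.1 := by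
    show Continuous fun w : {v : Fin 2 → ℝ // v ≠ 0} => ∑ k, w.1 k * w.1 k
    exact continuous_finset_sum _ fun k _ => (hc k).mul (hc k)
  have hinv : Continuous fun w : {v : Fin 2 → ℝ // v ≠ 0} => (w.1 ⬝ᵥ w.1)⁻¹ :=
    hd.inv₀ fun w => ne_of_gt (dp_pos w.2)
  exact continuous_const.mul (((hinv.mul ((hc i).mul (hc j)))).sub continuous_const)

instance : T1Space (ℙ ℝ (Fin 2 → ℝ)) := by
  constructor
  intro q
  induction q using Projectivization.ind with
  | h v hv =>
    rw [← isQuotientMap_mkP.isClosed_preimage]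
    have hset : ((fun w : {v : Fin 2 → ℝ // v ≠ 0} => Projectivization.mk ℝ w.1 w.2) ⁻¹'
        {Projectivization.mk ℝ v hv})
        = Subtype.val ⁻¹' ((Submodule.span ℝ {v} : Submodule ℝ (Fin 2 → ℝ)) : Set (Fin 2 → ℝ)) := by
      ext w
      simp only [Set.mem_preimage, Set.mem_singleton_iff, SetLike.mem_coe,
        Submodule.mem_span_singleton]
      exact Projectivization.mk_eq_mk_iff' ℝ w.1 v w.2 hv
    rw [hset]
    exact ((Submodule.span ℝ {v}).closed_of_finiteDimensional).preimage continuous_subtype_val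

lemma continuous_pmap (f : (Fin 2 → ℝ) →ₗ[ℝ] (Fin 2 → ℝ)) (hf : Function.Injective f) :
    Continuous (Projectivization.map f hf) := by
  rw [isQuotientMap_mkP.continuous_iff]
  have heq : (Projectivization.map f hf ∘
      fun w : {v : Fin 2 → ℝ // v ≠ 0} => Projectivization.mk ℝ w.1 w.2)
      = (fun w : {v : Fin 2 → ℝ // v ≠ 0} => Projectivization.mk ℝ w.1 w.2) ∘
        (fun w : {v : Fin 2 → ℝ // v ≠ 0} =>
          (⟨f w.1, fun hz => w.2 (hf (by simp [hz]))⟩ : {v : Fin 2 → ℝ // v ≠ 0})) := by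
    funext w
    exact Projectivization.map_mk f hf w.1 w.2
  rw [heq]
  exact isQuotientMap_mkP.continuous.comp
    ((f.continuous_of_finiteDimensional.comp continuous_subtype_val).subtype_mk _)

lemma measurable_pmap (f : (Fin 2 → ℝ) →ₗ[ℝ] (Fin 2 → ℝ)) (hf : Function.Injective f) :
    Measurable (Projectivization.map f hf) :=
  (continuous_pmap f hf).measurable

lemma abs_muP1_le (q : ℙ ℝ (Fin 2 → ℝ)) (i j : Fin 2) : |muP1 q i j| ≤ 1 := by
  induction q using Projectivization.ind with
  | h v hv =>
    rw [muP1_mk v hv i j]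
    have hS : 0 < v ⬝ᵥ v := dp_pos hv
    have hii : ∀ k, v k * v k ≤ v ⬝ᵥ v := by
      intro k
      have := Finset.single_le_sum (f := fun k => v k * v k)
        (fun k _ => mul_self_nonneg (v k)) (Finset.mem_univ k)
      simpa [dotProduct] using this
    have h1 : |v i * v j| ≤ v ⬝ᵥ v := by
      rw [abs_mul]
      nlinarith [hii i, hii j, abs_mul_abs_self (v i), abs_mul_abs_self (v j),
        abs_nonneg (v i), abs_nonneg (v j), mul_self_nonneg (|v i| - |v j|)]
    have h2 : |(v ⬝ᵥ v)⁻¹ * (v i * v j)| ≤ 1 := by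
      rw [abs_mul, abs_of_pos (inv_pos.mpr hS)]
      rw [inv_mul_le_iff₀ hS, mul_one]
      exact h1
    have h3 : |(2:ℝ)⁻¹ * (if i = j then (1:ℝ) else 0)| ≤ 2⁻¹ := by
      split <;> rw [abs_of_nonneg (by norm_num)] <;> norm_num
    calc |(2:ℝ)⁻¹ * ((v ⬝ᵥ v)⁻¹ * (v i * v j) - 2⁻¹ * (if i = j then 1 else 0))|
        = 2⁻¹ * |(v ⬝ᵥ v)⁻¹ * (v i * v j) - 2⁻¹ * (if i = j then 1 else 0)| := by
          rw [abs_mul]; norm_num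
      _ ≤ 2⁻¹ * (|(v ⬝ᵥ v)⁻¹ * (v i * v j)| + |(2:ℝ)⁻¹ * (if i = j then 1 else 0)|) := by
          gcongr; exact abs_sub _ _
      _ ≤ 2⁻¹ * (1 + 2⁻¹) := by gcongr
      _ ≤ 1 := by norm_num

lemma integrable_muP1_entry (μ : Measure (ℙ ℝ (Fin 2 → ℝ))) [IsProbabilityMeasure μ]
    (i j : Fin 2) : Integrable (fun q => muP1 q i j) μ := by
  refine Integrable.mono' (integrable_const 1)
    (continuous_muP1_entry i j).aestronglyMeasurable ?_
  exact ae_of_all _ fun q => by simpa [Real.norm_eq_abs] using abs_muP1_le q i j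

lemma integral_two_point (p₁ p₂ : ℙ ℝ (Fin 2 → ℝ)) (f : ℙ ℝ (Fin 2 → ℝ) → ℝ) :
    ∫ q, f q ∂((2:ENNReal)⁻¹ • Measure.dirac p₁ + (2:ENNReal)⁻¹ • Measure.dirac p₂)
      = 2⁻¹ * f p₁ + 2⁻¹ * f p₂ := by
  have hint : ∀ p : ℙ ℝ (Fin 2 → ℝ),
      Integrable f ((2:ENNReal)⁻¹ • Measure.dirac p) := by
    intro p
    refine Integrable.smul_measure ?_ (by norm_num)
    exact (integrable_const (f p)).congr (MeasureTheory.ae_eq_dirac f).symm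
  rw [MeasureTheory.integral_add_measure (hint p₁) (hint p₂)]
  rw [MeasureTheory.integral_smul_measure, MeasureTheory.integral_smul_measure,
    MeasureTheory.integral_dirac, MeasureTheory.integral_dirac]
  norm_num

def hfun (u : Fin 2 → ℝ) (q : ℙ ℝ (Fin 2 → ℝ)) : ℝ :=
  ∑ i, ∑ j, ((u ⬝ᵥ u)⁻¹ * (u i * u j)) * muP1 q i j

lemma hfun_mk (u w : Fin 2 → ℝ) (hu : u ≠ 0) (hw : w ≠ 0) :
    hfun u (Projectivization.mk ℝ w hw)
      = 2⁻¹ * ((u ⬝ᵥ w)^2 / ((u ⬝ᵥ u) * (w ⬝ᵥ w)) - 2⁻¹) := by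
  have hu' : u 0 * u 0 + u 1 * u 1 ≠ 0 := by
    simpa [dotProduct, Fin.sum_univ_two] using (dp_pos hu).ne'
  have hw' : w 0 * w 0 + w 1 * w 1 ≠ 0 := by
    simpa [dotProduct, Fin.sum_univ_two] using (dp_pos hw).ne'
  simp only [hfun, Fin.sum_univ_two, muP1_mk, dotProduct]
  norm_num
  have hu2 : u 0 ^ 2 + u 1 ^ 2 ≠ 0 := by rw [sq, sq]; exact hu'
  have hw2 : w 0 ^ 2 + w 1 ^ 2 ≠ 0 := by rw [sq, sq]; exact hw'
  field_simp
  ring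

lemma hfun_nonneg (u : Fin 2 → ℝ) (hu : u ≠ 0) (q : ℙ ℝ (Fin 2 → ℝ)) :
    0 ≤ hfun u q + 4⁻¹ := by
  induction q using Projectivization.ind with
  | h w hw =>
    rw [hfun_mk u w hu hw]
    have h1 : 0 ≤ (u ⬝ᵥ w)^2 / ((u ⬝ᵥ u) * (w ⬝ᵥ w)) :=
      div_nonneg (sq_nonneg _) (le_of_lt (mul_pos (dp_pos hu) (dp_pos hw)))
    linarith

lemma hfun_self (u : Fin 2 → ℝ) (hu : u ≠ 0) :
    hfun u (Projectivization.mk ℝ u hu) = 4⁻¹ := by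
  rw [hfun_mk u u hu hu]
  have h := (dp_pos hu).ne'
  rw [← sq (u ⬝ᵥ u), div_self (pow_ne_zero 2 h)]
  norm_num

lemma perp_ne_zero (u : Fin 2 → ℝ) (hu : u ≠ 0) : ![-u 1, u 0] ≠ 0 := by
  intro h
  apply hu
  have h0 : (![-u 1, u 0] : Fin 2 → ℝ) 0 = 0 := by rw [h]; rfl
  have h1 : (![-u 1, u 0] : Fin 2 → ℝ) 1 = 0 := by rw [h]; rfl
  simp at h0 h1
  funext k
  fin_cases k <;> simp [h0, h1]

lemma hfun_eq_zero_iff (u : Fin 2 → ℝ) (hu : u ≠ 0) (q : ℙ ℝ (Fin 2 → ℝ))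
    (h : hfun u q + 4⁻¹ = 0) :
    q = Projectivization.mk ℝ ![-u 1, u 0] (perp_ne_zero u hu) := by
  induction q using Projectivization.ind with
  | h w hw =>
    rw [hfun_mk u w hu hw] at h
    have hd : (u ⬝ᵥ w)^2 / ((u ⬝ᵥ u) * (w ⬝ᵥ w)) = 0 := by linarith
    have hne : (u ⬝ᵥ u) * (w ⬝ᵥ w) ≠ 0 := (mul_pos (dp_pos hu) (dp_pos hw)).ne'
    have huw : u ⬝ᵥ w = 0 := by
      have := (div_eq_zero_iff.mp hd).resolve_right hne
      exact pow_eq_zero_iff (n := 2) (by norm_num) |>.mp this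
    have huw' : u 0 * w 0 + u 1 * w 1 = 0 := by
      simpa [dotProduct, Fin.sum_univ_two] using huw
    rw [Projectivization.mk_eq_mk_iff']
    by_cases h0 : u 0 = 0
    · have h1 : u 1 ≠ 0 := by
        intro h1; apply hu; funext k; fin_cases k <;> simp [h0, h1]
      have hw1 : w 1 = 0 := by
        rw [h0] at huw'
        have : u 1 * w 1 = 0 := by simpa using huw'
        exact (mul_eq_zero.mp this).resolve_left h1
      refine ⟨w 0 / (-u 1), ?_⟩
      funext k
      fin_cases k
      · simp only [Pi.smul_apply, smul_eq_mul, Fin.zero_eta, Matrix.cons_val_zero]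
        field_simp
      · simp [hw1]; exact Or.inr h0
    · refine ⟨w 1 / u 0, ?_⟩
      funext k
      fin_cases k
      · simp only [Pi.smul_apply, smul_eq_mul, Fin.zero_eta, Matrix.cons_val_zero]
        field_simp
        linear_combination -huw'
      · simp only [Pi.smul_apply, smul_eq_mul, Fin.mk_one, Matrix.cons_val_one, Matrix.head_cons,
          Matrix.cons_val_zero]
        field_simp

lemma mk_ne_perp (u : Fin 2 → ℝ) (hu : u ≠ 0) :
    Projectivization.mk ℝ u hu ≠ Projectivization.mk ℝ ![-u 1, u 0] (perp_ne_zero u hu) := by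
  intro h
  rw [Projectivization.mk_eq_mk_iff'] at h
  obtain ⟨a, ha⟩ := h
  have h0 : a * (-u 1) = u 0 := by
    have := congrFun ha 0; simpa using this
  have h1 : a * u 0 = u 1 := by
    have := congrFun ha 1; simpa using this
  have hS : u 0 * u 0 + u 1 * u 1 ≠ 0 := by
    simpa [dotProduct, Fin.sum_univ_two] using (dp_pos hu).ne'
  exact hS (by linear_combination (-(u 0)) * h0 - u 1 * h1)

lemma integrable_hfun (u : Fin 2 → ℝ) (μ : Measure (ℙ ℝ (Fin 2 → ℝ)))
    [IsProbabilityMeasure μ] : Integrable (hfun u) μ := by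
  have : (hfun u) = fun q => ∑ i, ∑ j, ((u ⬝ᵥ u)⁻¹ * (u i * u j)) * muP1 q i j := rfl
  rw [this]
  refine integrable_finset_sum _ fun i _ => integrable_finset_sum _ fun j _ => ?_
  exact (integrable_muP1_entry μ i j).const_mul _

lemma integral_hfun_eq_zero (u : Fin 2 → ℝ) (μ : Measure (ℙ ℝ (Fin 2 → ℝ)))
    [IsProbabilityMeasure μ] (h : ∀ i j : Fin 2, ∫ q, muP1 q i j ∂μ = 0) :
    ∫ q, hfun u q ∂μ = 0 := by
  have hflat : ∀ q, hfun u q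
      = ∑ p : Fin 2 × Fin 2, ((u ⬝ᵥ u)⁻¹ * (u p.1 * u p.2)) * muP1 q p.1 p.2 := by
    intro q
    rw [hfun, Fintype.sum_prod_type]
  simp_rw [hflat]
  rw [MeasureTheory.integral_finset_sum]
  · refine Finset.sum_eq_zero fun p _ => ?_
    rw [MeasureTheory.integral_const_mul, h p.1 p.2, mul_zero]
  · exact fun p _ => (integrable_muP1_entry μ p.1 p.2).const_mul _

lemma mk_congr (v w : Fin 2 → ℝ) (hv : v ≠ 0) (h : v = w) :
    Projectivization.mk ℝ v hv = Projectivization.mk ℝ w (h ▸ hv) := by subst h; rfl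

lemma eq_two_point {α : Type*} [MeasurableSpace α] [MeasurableSingletonClass α]
    (μ : Measure α) (p p' : α) (hne : p ≠ p') (h1 : μ {p} = 2⁻¹) (h2 : μ {p'} = 2⁻¹)
    (h0 : μ ({p, p'}ᶜ) = 0) :
    μ = (2:ENNReal)⁻¹ • Measure.dirac p + (2:ENNReal)⁻¹ • Measure.dirac p' := by
  classical
  ext s hs
  have hm2 : MeasurableSet ({p, p'} : Set α) := (measurableSet_singleton p').insert p
  have hsplit : μ (s ∩ {p, p'}) + μ (s \ {p, p'}) = μ s := measure_inter_add_diff s hm2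
  have hdiff : μ (s \ {p, p'}) = 0 := measure_mono_null (fun x hx => hx.2) h0
  have hint : s ∩ {p, p'} = (s ∩ {p}) ∪ (s ∩ {p'}) := by
    rw [← Set.inter_union_distrib_left, Set.singleton_union]
  have hdisj : Disjoint (s ∩ {p}) (s ∩ {p'}) := by
    refine Set.disjoint_left.mpr ?_
    rintro x ⟨-, hx1⟩ ⟨-, hx2⟩
    simp only [Set.mem_singleton_iff] at hx1 hx2
    exact hne (hx1 ▸ hx2)
  have hμs : μ s = μ (s ∩ {p}) + μ (s ∩ {p'}) := by
    rw [← hsplit, hdiff, add_zero, hint,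
      measure_union hdisj (hs.inter (measurableSet_singleton p'))]
  have hval : ∀ (x : α), μ {x} = 2⁻¹ → μ (s ∩ {x}) = if x ∈ s then (2⁻¹ : ENNReal) else 0 := by
    intro x hx
    by_cases hxs : x ∈ s
    · rw [if_pos hxs, Set.inter_eq_self_of_subset_right (Set.singleton_subset_iff.mpr hxs), hx]
    · rw [if_neg hxs, Set.inter_singleton_eq_empty.mpr hxs, measure_empty]
  rw [hμs, hval p h1, hval p' h2, Measure.add_apply, Measure.smul_apply, Measure.smul_apply,
    Measure.dirac_apply' _ hs, Measure.dirac_apply' _ hs, smul_eq_mul, smul_eq_mul]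
  by_cases hp : p ∈ s <;> by_cases hp' : p' ∈ s <;>
    simp [Set.indicator, hp, hp']

lemma pmap_cancel (A B : Matrix (Fin 2) (Fin 2) ℝ) (hA : Function.Injective (Matrix.toLin' A))
    (hB : Function.Injective (Matrix.toLin' B)) (hBA : B * A = 1) (q : ℙ ℝ (Fin 2 → ℝ)) :
    Projectivization.map (Matrix.toLin' B) hB (Projectivization.map (Matrix.toLin' A) hA q)
      = q := by
  induction q using Projectivization.ind with
  | h v hv =>
    rw [Projectivization.map_mk, Projectivization.map_mk]
    have hval : Matrix.toLin' B (Matrix.toLin' A v) = v := by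
      rw [Matrix.toLin'_apply, Matrix.toLin'_apply, Matrix.mulVec_mulVec, hBA,
        Matrix.one_mulVec]
    rw [Projectivization.mk_eq_mk_iff']
    exact ⟨1, by rw [one_smul, hval]⟩

lemma continuous_hfun (u : Fin 2 → ℝ) : Continuous (hfun u) := by
  have : hfun u = fun q => ∑ i, ∑ j, ((u ⬝ᵥ u)⁻¹ * (u i * u j)) * muP1 q i j := rfl
  rw [this]
  exact continuous_finset_sum _ fun i _ => continuous_finset_sum _ fun j _ =>
    continuous_const.mul (continuous_muP1_entry i j)

lemma ne_zero_of_coord {v : Fin 2 → ℝ} {k : Fin 2} (h : v k ≠ 0) : v ≠ 0 :=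
  fun hv => h (by rw [hv]; rfl)

lemma e0_ne_zero : (![1, 0] : Fin 2 → ℝ) ≠ 0 := ne_zero_of_coord (k := 0) (by norm_num)
lemma e1_ne_zero : (![0, 1] : Fin 2 → ℝ) ≠ 0 := ne_zero_of_coord (k := 1) (by norm_num)

lemma det_ne_of_ne (v w : Fin 2 → ℝ) (hv : v ≠ 0) (hw : w ≠ 0)
    (h : Projectivization.mk ℝ v hv ≠ Projectivization.mk ℝ w hw) :
    v 0 * w 1 - w 0 * v 1 ≠ 0 := by
  intro hd
  apply h
  rw [Projectivization.mk_eq_mk_iff']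
  by_cases h0 : w 0 = 0
  · have h1 : w 1 ≠ 0 := by
      intro h1; apply hw; funext k; fin_cases k <;> simp [h0, h1]
    have hv0 : v 0 = 0 := by
      have : v 0 * w 1 = 0 := by rw [h0] at hd; linarith
      exact (mul_eq_zero.mp this).resolve_right h1
    refine ⟨v 1 / w 1, ?_⟩
    funext k
    fin_cases k <;> simp [hv0, h0] <;> field_simp
  · refine ⟨v 0 / w 0, ?_⟩
    funext k
    fin_cases k
    · simp only [Pi.smul_apply, smul_eq_mul, Fin.zero_eta]
      field_simp
    · simp only [Pi.smul_apply, smul_eq_mul, Fin.mk_one]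
      field_simp
      linear_combination hd

/-- A probability measure `ν` on `ℙ¹(ℝ)` is `SL(2,ℝ)`-polystable
(some translate `g_*ν` satisfies `F(g_*ν) = ∫ μ_p d(g_*ν) = 0`) but not stable
(stability being `ν({p}) < 1/2` for every point `p`) if and only if
`ν = ½δ_{p₁} + ½δ_{p₂}` for two distinct points `p₁ ≠ p₂`. -/
theorem polystable_not_stable_measures_on_P1
    (hinj : ∀ g : Matrix.SpecialLinearGroup (Fin 2) ℝ,
      Function.Injective (Matrix.toLin' (g : Matrix (Fin 2) (Fin 2) ℝ)))
    (ν : Measure (ℙ ℝ (Fin 2 → ℝ))) [IsProbabilityMeasure ν] :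
    -- polystable ...
    ((∃ g : Matrix.SpecialLinearGroup (Fin 2) ℝ, ∀ i j : Fin 2,
        (∫ q, muP1 q i j
          ∂(ν.map (Projectivization.map
              (Matrix.toLin' (g : Matrix (Fin 2) (Fin 2) ℝ)) (hinj g)))) = 0) ∧
      -- ... but not stable
      ¬ (∀ q : ℙ ℝ (Fin 2 → ℝ), ν {q} < 1/2))
    ↔ ∃ p₁ p₂ : ℙ ℝ (Fin 2 → ℝ), p₁ ≠ p₂ ∧
        ν = (2:ENNReal)⁻¹ • Measure.dirac p₁ + (2:ENNReal)⁻¹ • Measure.dirac p₂ := by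
  constructor
  · rintro ⟨⟨g, hg⟩, hns⟩
    push_neg at hns
    obtain ⟨q₀, hq₀⟩ := hns
    set φ := Projectivization.map
      (Matrix.toLin' (g : Matrix (Fin 2) (Fin 2) ℝ)) (hinj g) with hφdef
    have hφm : Measurable φ := measurable_pmap _ _
    set μ := ν.map φ with hμdef
    haveI : IsProbabilityMeasure μ := Measure.isProbabilityMeasure_map hφm.aemeasurable
    set p := φ q₀ with hpdef
    have hμp : (2:ENNReal)⁻¹ ≤ μ {p} := by
      rw [hμdef, Measure.map_apply hφm (measurableSet_singleton p)]
      calc (2:ENNReal)⁻¹ = 1/2 := by rw [one_div]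
        _ ≤ ν {q₀} := hq₀
        _ ≤ ν (φ ⁻¹' {p}) := measure_mono (fun x hx => by
            simp only [Set.mem_singleton_iff] at hx
            simp [Set.mem_preimage, hx, hpdef])
    set u := p.rep with hudef
    have hu0 : u ≠ 0 := p.rep_nonzero
    have hfint : Integrable (fun q => hfun u q + 4⁻¹) μ :=
      (integrable_hfun u μ).add (integrable_const _)
    have hfnn : 0 ≤ᵐ[μ] (fun q => hfun u q + 4⁻¹) := ae_of_all _ (hfun_nonneg u hu0)
    have hI : ∫ q, (hfun u q + 4⁻¹) ∂μ = 4⁻¹ := by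
      rw [MeasureTheory.integral_add (integrable_hfun u μ) (integrable_const _),
        integral_hfun_eq_zero u μ hg, MeasureTheory.integral_const]
      simp
    have hfp : hfun u p + 4⁻¹ = 2⁻¹ := by
      have h1 : hfun u p = 4⁻¹ := by
        conv_lhs => rw [← Projectivization.mk_rep p]
        exact hfun_self _ hu0
      rw [h1]; norm_num
    have hsingle : ∫ q in {p}, (hfun u q + 4⁻¹) ∂μ = (μ {p}).toReal * 2⁻¹ := by
      rw [Measure.restrict_singleton, MeasureTheory.integral_smul_measure,
        MeasureTheory.integral_dirac, hfp, smul_eq_mul]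
    have hle : (μ {p}).toReal * 2⁻¹ ≤ 4⁻¹ := by
      have h := MeasureTheory.setIntegral_le_integral (s := {p}) hfint hfnn
      rw [hsingle, hI] at h
      exact h
    have htop : μ {p} ≠ ⊤ := measure_ne_top μ _
    have hge : (2:ℝ)⁻¹ ≤ (μ {p}).toReal := by
      have h := ENNReal.toReal_mono htop hμp
      simpa using h
    have htoReal : (μ {p}).toReal = 2⁻¹ := le_antisymm (by linarith) hge
    have hμp2 : μ {p} = 2⁻¹ := by
      have h := ENNReal.ofReal_toReal htop
      rw [htoReal] at h
      rw [← h]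
      rw [show ((2:ℝ)⁻¹) = (1:ℝ)/2 by norm_num, ENNReal.ofReal_div_of_pos (by norm_num)]
      simp
    have hcompl : ∫ q in {p}ᶜ, (hfun u q + 4⁻¹) ∂μ = 0 := by
      have hadd := MeasureTheory.integral_add_compl (measurableSet_singleton p) hfint
      rw [hI, hsingle, htoReal] at hadd
      linarith
    have hres : (fun q => hfun u q + 4⁻¹) =ᵐ[μ.restrict {p}ᶜ] 0 :=
      (MeasureTheory.integral_eq_zero_iff_of_nonneg_ae (ae_restrict_of_ae hfnn)
        hfint.restrict).mp hcompl
    set p' := Projectivization.mk ℝ ![-u 1, u 0] (perp_ne_zero u hu0) with hp'def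
    have hpp' : p ≠ p' := by
      have hmk : Projectivization.mk ℝ u hu0 = p := Projectivization.mk_rep p
      rw [← hmk]
      exact mk_ne_perp u hu0
    have hfmeas : MeasurableSet {q : ℙ ℝ (Fin 2 → ℝ) | hfun u q + 4⁻¹ ≠ 0} := by
      have hc : Continuous fun q : ℙ ℝ (Fin 2 → ℝ) => hfun u q + 4⁻¹ :=
        (continuous_hfun u).add continuous_const
      exact (hc.measurable (measurableSet_singleton 0)).compl
    have hnull : μ ({p, p'}ᶜ) = 0 := by
      have h0 : μ.restrict {p}ᶜ {q | hfun u q + 4⁻¹ ≠ 0} = 0 := by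
        have h := hres
        rw [Filter.EventuallyEq, ae_iff] at h
        simpa using h
      rw [Measure.restrict_apply hfmeas] at h0
      refine measure_mono_null ?_ h0
      intro q hq
      simp only [Set.mem_compl_iff, Set.mem_insert_iff, Set.mem_singleton_iff, not_or] at hq
      refine ⟨?_, hq.1⟩
      intro hzero
      exact hq.2 (hfun_eq_zero_iff u hu0 q hzero)
    have hμp'2 : μ {p'} = 2⁻¹ := by
      have hm2 : MeasurableSet ({p, p'} : Set (ℙ ℝ (Fin 2 → ℝ))) :=
        (measurableSet_singleton p').insert p
      have htotal : μ {p, p'} + μ ({p, p'}ᶜ) = 1 := by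
        rw [measure_add_measure_compl hm2]
        exact measure_univ
      have hU : μ ({p, p'} : Set (ℙ ℝ (Fin 2 → ℝ))) = μ {p} + μ {p'} := by
        rw [← Set.singleton_union,
          measure_union (Set.disjoint_singleton.mpr hpp') (measurableSet_singleton p')]
      rw [hnull, add_zero, hU, hμp2] at htotal
      have h11 : (2:ENNReal)⁻¹ + 2⁻¹ = 1 := ENNReal.inv_two_add_inv_two
      rw [← h11] at htotal
      exact (ENNReal.add_right_inj (by norm_num)).mp htotal
    have hμeq := eq_two_point μ p p' hpp' hμp2 hμp'2 hnull
    set ψ := Projectivization.map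
      (Matrix.toLin' ((g⁻¹ : Matrix.SpecialLinearGroup (Fin 2) ℝ) : Matrix (Fin 2) (Fin 2) ℝ))
      (hinj g⁻¹) with hψdef
    have hψm : Measurable ψ := measurable_pmap _ _
    have hBA : ((g⁻¹ : Matrix.SpecialLinearGroup (Fin 2) ℝ) : Matrix (Fin 2) (Fin 2) ℝ)
        * (g : Matrix (Fin 2) (Fin 2) ℝ) = 1 := by
      rw [← Matrix.SpecialLinearGroup.coe_mul, inv_mul_cancel]
      rfl
    have hAB : (g : Matrix (Fin 2) (Fin 2) ℝ)
        * ((g⁻¹ : Matrix.SpecialLinearGroup (Fin 2) ℝ) : Matrix (Fin 2) (Fin 2) ℝ) = 1 := by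
      rw [← Matrix.SpecialLinearGroup.coe_mul, mul_inv_cancel]
      rfl
    have hcancel : ∀ q, ψ (φ q) = q := pmap_cancel _ _ (hinj g) (hinj g⁻¹) hBA
    have hcancel2 : ∀ q, φ (ψ q) = q := pmap_cancel _ _ (hinj g⁻¹) (hinj g) hAB
    refine ⟨ψ p, ψ p', ?_, ?_⟩
    · intro h
      apply hpp'
      rw [← hcancel2 p, ← hcancel2 p', h]
    · have hν2 : ν = μ.map ψ := by
        rw [hμdef, Measure.map_map hψm hφm]
        have hid : (ψ ∘ φ) = id := funext hcancel
        rw [hid, Measure.map_id]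
      rw [hν2, hμeq, Measure.map_add _ _ hψm, Measure.map_smul, Measure.map_smul,
        Measure.map_dirac' hψm, Measure.map_dirac' hψm]
  · rintro ⟨p₁, p₂, hne, hν⟩
    constructor
    · have hv₁ : p₁.rep ≠ 0 := p₁.rep_nonzero
      have hv₂ : p₂.rep ≠ 0 := p₂.rep_nonzero
      have hne' : Projectivization.mk ℝ p₁.rep hv₁ ≠ Projectivization.mk ℝ p₂.rep hv₂ := by
        rw [Projectivization.mk_rep, Projectivization.mk_rep]
        exact hne
      set v₁ := p₁.rep with hv₁def
      set v₂ := p₂.rep with hv₂def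
      set d := v₁ 0 * v₂ 1 - v₂ 0 * v₁ 1 with hddef
      have hd : d ≠ 0 := det_ne_of_ne v₁ v₂ hv₁ hv₂ hne'
      set M : Matrix (Fin 2) (Fin 2) ℝ := !![d⁻¹ * v₁ 0, v₂ 0; d⁻¹ * v₁ 1, v₂ 1] with hMdef
      have hdet : M.det = 1 := by
        rw [hMdef, Matrix.det_fin_two_of]
        field_simp
        exact hddef.symm
      refine ⟨(⟨M, hdet⟩ : Matrix.SpecialLinearGroup (Fin 2) ℝ)⁻¹, ?_⟩
      intro i j
      set g0 : Matrix.SpecialLinearGroup (Fin 2) ℝ := ⟨M, hdet⟩ with hg0def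
      set φ := Projectivization.map
        (Matrix.toLin' ((g0⁻¹ : Matrix.SpecialLinearGroup (Fin 2) ℝ) : Matrix (Fin 2) (Fin 2) ℝ))
        (hinj g0⁻¹) with hφdef
      have hφm : Measurable φ := measurable_pmap _ _
      have hBA : ((g0⁻¹ : Matrix.SpecialLinearGroup (Fin 2) ℝ) : Matrix (Fin 2) (Fin 2) ℝ)
          * M = 1 := by
        have hM : (g0 : Matrix (Fin 2) (Fin 2) ℝ) = M := rfl
        rw [← hM, ← Matrix.SpecialLinearGroup.coe_mul, inv_mul_cancel]
        rfl
      have hcol0 : M *ᵥ ![1, 0] = d⁻¹ • v₁ := by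
        funext k
        fin_cases k <;> simp [hMdef, Matrix.mulVec, dotProduct, Fin.sum_univ_two]
      have hcol1 : M *ᵥ ![0, 1] = v₂ := by
        funext k
        fin_cases k <;> simp [hMdef, Matrix.mulVec, dotProduct, Fin.sum_univ_two]
      have hdv : d⁻¹ • v₁ ≠ 0 := smul_ne_zero (inv_ne_zero hd) hv₁
      have he0 : Matrix.toLin'
          ((g0⁻¹ : Matrix.SpecialLinearGroup (Fin 2) ℝ) : Matrix (Fin 2) (Fin 2) ℝ)
          (d⁻¹ • v₁) = ![1, 0] := by
        rw [Matrix.toLin'_apply, ← hcol0, Matrix.mulVec_mulVec, hBA, Matrix.one_mulVec]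
      have he1 : Matrix.toLin'
          ((g0⁻¹ : Matrix.SpecialLinearGroup (Fin 2) ℝ) : Matrix (Fin 2) (Fin 2) ℝ)
          v₂ = ![0, 1] := by
        rw [Matrix.toLin'_apply, ← hcol1, Matrix.mulVec_mulVec, hBA, Matrix.one_mulVec]
      have hφp₁ : φ p₁ = Projectivization.mk ℝ ![1, 0] e0_ne_zero := by
        have h1 : p₁ = Projectivization.mk ℝ (d⁻¹ • v₁) hdv := by
          rw [← Projectivization.mk_rep p₁, Projectivization.mk_eq_mk_iff']
          exact ⟨d, by rw [smul_smul, mul_inv_cancel₀ hd, one_smul]⟩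
        rw [h1, hφdef, Projectivization.map_mk]
        exact mk_congr _ _ _ he0
      have hφp₂ : φ p₂ = Projectivization.mk ℝ ![0, 1] e1_ne_zero := by
        have h2 : p₂ = Projectivization.mk ℝ v₂ hv₂ := (Projectivization.mk_rep p₂).symm
        rw [h2, hφdef, Projectivization.map_mk]
        exact mk_congr _ _ _ he1
      have hmap : ν.map φ
          = (2:ENNReal)⁻¹ • Measure.dirac (Projectivization.mk ℝ ![1, 0] e0_ne_zero)
            + (2:ENNReal)⁻¹ • Measure.dirac (Projectivization.mk ℝ ![0, 1] e1_ne_zero) := by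
        rw [hν, Measure.map_add _ _ hφm, Measure.map_smul, Measure.map_smul,
          Measure.map_dirac' hφm, Measure.map_dirac' hφm, hφp₁, hφp₂]
      rw [hmap, integral_two_point, muP1_mk, muP1_mk]
      fin_cases i <;> fin_cases j <;>
        norm_num [dotProduct, Fin.sum_univ_two]
    · intro hstable
      have h1 := hstable p₁
      rw [hν] at h1
      have h2 : ((2:ENNReal)⁻¹ • Measure.dirac p₁ + (2:ENNReal)⁻¹ • Measure.dirac p₂) {p₁}
          = 2⁻¹ := by
        rw [Measure.add_apply, Measure.smul_apply, Measure.smul_apply,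
          Measure.dirac_apply' _ (measurableSet_singleton p₁),
          Measure.dirac_apply' _ (measurableSet_singleton p₁)]
        simp [Set.indicator, Ne.symm hne]
      rw [h2, one_div] at h1
      exact lt_irrefl _ h1

end
end
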